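/- For any feasible solution y of the LP relaxation of the maximum weight ideal cut problem, the integral vector y* defined by y*_v = 1 if y_v > 0 and y*_v = 0 otherwise is feasible; moreover, if y is optimal then y* achieves the same objective value as y. -/

import Mathlib

/-- An ideal cut: `s ∈ S`, `t ∉ S`, and no edge of `E` enters `S` from its complement. -/
def IdealCut {V : Type*} (E : V → V → Prop) (s t : V) (S : Finset V) : Prop :=
  s ∈ S ∧ t ∉ S ∧ ∀ u v : V, E u v → v ∈ S → u ∈ S

/-- The weight of the cut: total weight of edges from `S` to its complement. -/
def cutWeight {V : Type*} [Fintype V] [DecidableEq V] (E : V → V → Prop) [DecidableRel E]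
    (w : V → V → ℚ) (S : Finset V) : ℚ :=
  ∑ q ∈ Finset.univ.filter (fun q : V × V => E q.1 q.2 ∧ q.1 ∈ S ∧ q.2 ∉ S), w q.1 q.2

/-- A maximum weight ideal cut. -/
def MaxIdealCut {V : Type*} [Fintype V] [DecidableEq V] (E : V → V → Prop) [DecidableRel E]
    (s t : V) (w : V → V → ℚ) (S : Finset V) : Prop :=
  IdealCut E s t S ∧ ∀ S' : Finset V, IdealCut E s t S' → cutWeight E w S' ≤ cutWeight E w S

/-- The directed graph is acyclic. -/
def Acyclic {V : Type*} (E : V → V → Prop) : Prop := ∀ v : V, ¬ Relation.TransGen E v v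

/-- Every vertex is reachable from `s` and reaches `t`. -/
def EveryVertexOnPath {V : Type*} (E : V → V → Prop) (s t : V) : Prop :=
  ∀ v : V, Relation.ReflTransGen E s v ∧ Relation.ReflTransGen E v t

/-- Feasibility for the LP relaxation of the maximum weight ideal cut problem. -/
def LPFeasible {V : Type*} (E : V → V → Prop) (s t : V) (y : V → ℚ) : Prop :=
  (∀ u v : V, E u v → y u ≤ y v) ∧ y s = 0 ∧ y t = 1

/-- The LP objective value `∑_{uv ∈ E} w_{uv} (y_v - y_u)`. -/
def LPValue {V : Type*} [Fintype V] (E : V → V → Prop) [DecidableRel E]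
    (w : V → V → ℚ) (y : V → ℚ) : ℚ :=
  ∑ q ∈ Finset.univ.filter (fun q : V × V => E q.1 q.2), w q.1 q.2 * (y q.2 - y q.1)

/-- Optimality for the LP relaxation. -/
def LPOptimal {V : Type*} [Fintype V] (E : V → V → Prop) [DecidableRel E]
    (s t : V) (w : V → V → ℚ) (y : V → ℚ) : Prop :=
  LPFeasible E s t y ∧ ∀ y' : V → ℚ, LPFeasible E s t y' → LPValue E w y' ≤ LPValue E w y

lemma LPValue_comb {V : Type*} [Fintype V] (E : V → V → Prop) [DecidableRel E]
    (w : V → V → ℚ) (c d : ℚ) (f g : V → ℚ) :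
    LPValue E w (fun v => c * f v + d * g v) = c * LPValue E w f + d * LPValue E w g := by
  simp only [LPValue, Finset.mul_sum, ← Finset.sum_add_distrib]
  exact Finset.sum_congr rfl fun q _ => by ring

/-- Rounding: for a feasible LP solution `y`, the 0/1 vector `y*` with `y*_v = 1` iff
`y_v > 0` is feasible; and if `y` is optimal, `y*` has the same objective value. -/
theorem lp_rounding {V : Type*} [Fintype V] [DecidableEq V]
    (E : V → V → Prop) [DecidableRel E] (s t : V) (w : V → V → ℚ)
    (hacyc : Acyclic E) (hpath : EveryVertexOnPath E s t)
    (y : V → ℚ) (hy : LPFeasible E s t y) :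
    LPFeasible E s t (fun v => if 0 < y v then 1 else 0) ∧
      (LPOptimal E s t w y →
        LPValue E w (fun v => if 0 < y v then 1 else 0) = LPValue E w y) := by
  obtain ⟨hmono, hs, ht⟩ := hy
  have hnn : ∀ v, 0 ≤ y v := by
    intro v
    have h := (hpath v).1
    have : y s ≤ y v := by
      induction h with
      | refl => exact le_rfl
      | tail _ h2 ih => exact le_trans ih (hmono _ _ h2)
    rw [hs] at this; exact this
  have hle1 : ∀ v, y v ≤ 1 := by
    intro v
    have h := (hpath v).2
    have : y v ≤ y t := by
      induction h using Relation.ReflTransGen.head_induction_on with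
      | refl => exact le_rfl
      | head h1 _ ih => exact le_trans (hmono _ _ h1) ih
    rw [ht] at this; exact this
  set ystar : V → ℚ := fun v => if 0 < y v then 1 else 0 with hystar
  have hzero : ∀ v, ¬ 0 < y v → y v = 0 := fun v h => le_antisymm (not_lt.1 h) (hnn v)
  have hfeas : LPFeasible E s t ystar := by
    refine ⟨?_, ?_, ?_⟩
    · intro u v huv
      by_cases h : 0 < y u
      · have h' : 0 < y v := lt_of_lt_of_le h (hmono u v huv)
        simp [ystar, h, h']
      · by_cases h' : 0 < y v <;> simp [ystar, h, h']
    · simp [ystar, hs]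
    · simp [ystar, ht]
  refine ⟨hfeas, ?_⟩
  intro hopt
  have hub := hopt.2 ystar hfeas
  have hSne : ((Finset.univ.filter (fun v => 0 < y v)).image y).Nonempty :=
    ⟨y t, Finset.mem_image_of_mem y (by simp [ht])⟩
  set a := ((Finset.univ.filter (fun v => 0 < y v)).image y).min' hSne with ha
  have ha_pos : 0 < a := by
    have hmem := Finset.min'_mem _ hSne
    rw [← ha] at hmem
    obtain ⟨v, hv, hva⟩ := Finset.mem_image.1 hmem
    rw [← hva]
    exact (Finset.mem_filter.1 hv).2
  have ha_le : ∀ v, 0 < y v → a ≤ y v := fun v hv =>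
    Finset.min'_le _ (y v) (Finset.mem_image_of_mem y (by simp [hv]))
  have ha1 : a ≤ 1 := le_trans (ha_le t (by rw [ht]; norm_num)) (hle1 t)
  by_cases hcase : a = 1
  · have hyeq : ystar = y := by
      funext v
      by_cases h : 0 < y v
      · have h1 := ha_le v h
        have h2 := hle1 v
        simp only [ystar, if_pos h]
        linarith [hcase ▸ h1]
      · simp [ystar, h, hzero v h]
    rw [hyeq]
  · have h1a : 0 < 1 - a := lt_of_le_of_ne (by linarith) (by intro h; exact hcase (by linarith))
    set z : V → ℚ := fun v => (y v - a * ystar v) / (1 - a) with hz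
    have hdecomp : ∀ v, y v = a * ystar v + (1 - a) * z v := by
      intro v
      simp only [hz]; rw [mul_div_assoc', mul_div_cancel_left₀ _ h1a.ne']; ring
    have hzfeas : LPFeasible E s t z := by
      refine ⟨?_, ?_, ?_⟩
      · intro u v huv
        have hle := hmono u v huv
        have hnum : y u - a * ystar u ≤ y v - a * ystar v := by
          by_cases hu : 0 < y u
          · have hv : 0 < y v := lt_of_lt_of_le hu hle
            simp only [ystar, if_pos hu, if_pos hv]
            linarith
          · by_cases hv : 0 < y v
            · simp only [ystar, if_neg hu, if_pos hv]
              have := ha_le v hv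
              have := hzero u hu
              linarith
            · simp only [ystar, if_neg hu, if_neg hv]
              linarith
        exact (div_le_div_iff_of_pos_right h1a).2 hnum
      · have : ystar s = 0 := by simp [ystar, hs]
        simp [hz, hs, this]
      · have h1 : ystar t = 1 := by simp [ystar, ht]
        simp only [hz, ht, h1]
        field_simp
    have hz_le := hopt.2 z hzfeas
    have hlin : LPValue E w y = a * LPValue E w ystar + (1 - a) * LPValue E w z := by
      rw [← LPValue_comb]
      congr 1
      funext v
      exact hdecomp v
    nlinarith [hub, hz_le, ha_pos, h1a]
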